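/- In SL(3, ℂ), let ṡ₁ be the matrix with rows (0,i,0), (i,0,0), (0,0,1) and ṡ₂ the matrix with rows (1,0,0), (0,0,i), (0,i,0); for ζ ∈ ℂ let n¹²_ζ = I + ζ E₁₂ and n²³_ζ = I + ζ E₂₃; for z ∈ ℂ set a(z) = (1+|z|²)^(−1/2), and let κ₁(z) be the matrix with rows (i z a(z), i a(z), 0), (i a(z), −i (conj z) a(z), 0), (0,0,1) and κ₂(z) the matrix with rows (1,0,0), (0, i z a(z), i a(z)), (0, i a(z), −i (conj z) a(z)). Then for all ζ₁, ζ₂ ∈ ℂ, setting z₂ = ζ₂ / sqrt(1+|ζ₁|²), there exists a 3×3 upper-triangular complex matrix d with positive real diagonal entries such that n¹²_{ζ₁} * ṡ₁ * n²³_{ζ₂} * ṡ₂ = κ₁(ζ₁) * κ₂(z₂) * d. -/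

import Mathlib

open Matrix

/-- The representative `ṡ₁` in `SL(3,ℂ)` of the simple reflection `r₁`. -/
def sdot1 : Matrix (Fin 3) (Fin 3) ℂ :=
  !![0, Complex.I, 0; Complex.I, 0, 0; 0, 0, 1]

/-- The representative `ṡ₂` in `SL(3,ℂ)` of the simple reflection `r₂`. -/
def sdot2 : Matrix (Fin 3) (Fin 3) ℂ :=
  !![1, 0, 0; 0, 0, Complex.I; 0, Complex.I, 0]

/-- The unipotent element `n¹²_ζ = I + ζ E₁₂`. -/
def n12 (ζ : ℂ) : Matrix (Fin 3) (Fin 3) ℂ := !![1, ζ, 0; 0, 1, 0; 0, 0, 1]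

/-- The unipotent element `n²³_ζ = I + ζ E₂₃`. -/
def n23 (ζ : ℂ) : Matrix (Fin 3) (Fin 3) ℂ := !![1, 0, 0; 0, 1, ζ; 0, 0, 1]

/-- `a(z) = (1 + |z|²)^(-1/2)`. -/
noncomputable def aFun (z : ℂ) : ℝ := (1 + ‖z‖ ^ 2) ^ (-(1 / 2 : ℝ))

/-- The special unitary factor `κ₁(z) = k(n_z ṡ₁)` in the first embedded `SL(2,ℂ)`. -/
noncomputable def kappa1 (z : ℂ) : Matrix (Fin 3) (Fin 3) ℂ :=
  !![Complex.I * z * (aFun z : ℂ), Complex.I * (aFun z : ℂ), 0;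
     Complex.I * (aFun z : ℂ), -Complex.I * (starRingEnd ℂ z) * (aFun z : ℂ), 0;
     0, 0, 1]

/-- The special unitary factor `κ₂(z) = k(n_z ṡ₂)` in the second embedded `SL(2,ℂ)`. -/
noncomputable def kappa2 (z : ℂ) : Matrix (Fin 3) (Fin 3) ℂ :=
  !![1, 0, 0;
     0, Complex.I * z * (aFun z : ℂ), Complex.I * (aFun z : ℂ);
     0, Complex.I * (aFun z : ℂ), -Complex.I * (starRingEnd ℂ z) * (aFun z : ℂ)]

lemma aFun_eq (z : ℂ) : aFun z = (Real.sqrt (1 + ‖z‖ ^ 2))⁻¹ := by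
  have h : (0:ℝ) ≤ 1 + ‖z‖ ^ 2 := by positivity
  rw [aFun, Real.rpow_neg h, Real.sqrt_eq_rpow]

lemma key (z : ℂ) : ∃ u : ℝ, 0 < u ∧ u = Real.sqrt (1 + ‖z‖ ^ 2) ∧
    (starRingEnd ℂ z) * z = (u : ℂ) ^ 2 - 1 ∧ aFun z = u⁻¹ := by
  refine ⟨Real.sqrt (1 + ‖z‖ ^ 2), Real.sqrt_pos.2 (by positivity), rfl, ?_, aFun_eq z⟩
  have h2 : Real.sqrt (1 + ‖z‖ ^ 2) ^ 2 = 1 + ‖z‖ ^ 2 :=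
    Real.sq_sqrt (by positivity)
  rw [mul_comm, Complex.mul_conj, ← Complex.sq_norm]
  have : ((Real.sqrt (1 + ‖z‖ ^ 2) : ℝ) : ℂ) ^ 2
      = ((Real.sqrt (1 + ‖z‖ ^ 2) ^ 2 : ℝ) : ℂ) := by push_cast; ring
  rw [this, h2]; push_cast; ring

set_option maxHeartbeats 10000000 in
/-- The length-two change of variables in `SL(3,ℂ)`: with `z₂ = ζ₂ / √(1+|ζ₁|²)`,
`n¹²_{ζ₁} ṡ₁ n²³_{ζ₂} ṡ₂ = κ₁(ζ₁) κ₂(z₂) d` for some `d ∈ D(3)`. -/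
theorem sl3_length_two_change_of_variables (ζ₁ ζ₂ : ℂ) :
    ∃ d : Matrix (Fin 3) (Fin 3) ℂ,
      (∀ i j : Fin 3, j < i → d i j = 0) ∧
      (∀ i : Fin 3, ∃ r : ℝ, 0 < r ∧ d i i = (r : ℂ)) ∧
      n12 ζ₁ * sdot1 * n23 ζ₂ * sdot2 =
        kappa1 ζ₁ * kappa2 (ζ₂ / (Real.sqrt (1 + ‖ζ₁‖ ^ 2) : ℂ)) * d := by
  obtain ⟨s, hs0, hsval, h1, ha1⟩ := key ζ₁
  rw [← hsval]
  have hsne : (s : ℂ) ≠ 0 := by exact_mod_cast hs0.ne'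
  obtain ⟨z₂, hz⟩ : ∃ z : ℂ, z = ζ₂ / (s : ℂ) := ⟨_, rfl⟩
  have hzz : ζ₂ = z₂ * (s : ℂ) := by rw [hz]; field_simp
  rw [← hz, hzz]
  obtain ⟨t, ht0, htval, h2, ha2⟩ := key z₂
  have htne : (t : ℂ) ≠ 0 := by exact_mod_cast ht0.ne'
  refine ⟨!![(s : ℂ), Complex.I * (starRingEnd ℂ ζ₁) * z₂,
        Complex.I * (starRingEnd ℂ ζ₁) * (s : ℂ)⁻¹;
        0, (t : ℂ), (starRingEnd ℂ z₂) * ((s : ℂ)⁻¹ * (t : ℂ)⁻¹);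
        0, 0, (s : ℂ)⁻¹ * (t : ℂ)⁻¹], ?_, ?_, ?_⟩
  · intro i j hij
    fin_cases i <;> fin_cases j <;> simp_all [Matrix.vecHead, Matrix.vecTail] <;> rfl
  · intro i
    fin_cases i
    · exact ⟨s, hs0, by simp⟩
    · exact ⟨t, ht0, by simp⟩
    · exact ⟨s⁻¹ * t⁻¹, by positivity, by push_cast; simp⟩
  · simp only [n12, sdot1, n23, sdot2, kappa1, kappa2, ha1, ha2]
    rw [Matrix.mul_fin_three, Matrix.mul_fin_three, Matrix.mul_fin_three,
      Matrix.mul_fin_three, Matrix.mul_fin_three]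
    ext i j
    fin_cases i <;> fin_cases j <;>
      · simp only [Matrix.cons_val', Matrix.cons_val_zero, Matrix.cons_val_one,
          Matrix.head_cons, Matrix.of_apply, Matrix.cons_val_two, Matrix.empty_val', Matrix.cons_val_fin_one, Matrix.head_fin_const, Matrix.vecHead, Matrix.vecTail,
          Function.comp]
        try push_cast
        try field_simp
        all_goals first
          | rfl
          | ring1
          | linear_combination (-Complex.I ^ 2 * z₂ * (s : ℂ) * (t : ℂ)) * h1
          | linear_combination (-(s : ℂ) ^ 2 * (t : ℂ) ^ 2 * Complex.I ^ 2) * h1 +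
              (-(s : ℂ) ^ 2 * Complex.I ^ 2) * h2 +
              ((s : ℂ) ^ 2 - (s : ℂ) ^ 4 * (t : ℂ) ^ 2) * Complex.I_sq
          | linear_combination (Complex.I ^ 2 * (starRingEnd ℂ ζ₁) * (s : ℂ) ^ 4 * (t : ℂ) ^ 2 *
              ((s : ℂ)⁻¹) ^ 6 * ((t : ℂ)⁻¹) ^ 4) * h2
          | (rw [eq_div_iff (by norm_num [hsne, htne])]
             linear_combination (-Complex.I ^ 2 * (s : ℂ) ^ 4 * (t : ℂ) ^ 4) * h1 +
               (-Complex.I ^ 2 * (s : ℂ) ^ 4 * (t : ℂ) ^ 2) * h2 +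
               ((s : ℂ) ^ 4 * (t : ℂ) ^ 2 - (s : ℂ) ^ 6 * (t : ℂ) ^ 4) * Complex.I_sq)
          | linear_combination (-Complex.I ^ 2 * z₂ * (t : ℂ)) * h1
          | linear_combination (-Complex.I ^ 2 * (t : ℂ) ^ 2) * h1 + (-Complex.I ^ 2) * h2
          | linear_combination (Complex.I ^ 2 * (starRingEnd ℂ ζ₁)) * h2
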